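/- Let M be a nonsingular right R-module. If (R ⊕ M) is a SIP-CS right R-module, then every cyclic submodule of M is projective. -/

import Mathlib

universe u v w

section Defs

variable {S : Type u} [Ring S]

/-- A submodule `A` is a direct summand of `M`. -/
def IsDirectSummand {M : Type v} [AddCommGroup M] [Module S M] (A : Submodule S M) : Prop :=
  ∃ B : Submodule S M, A ⊓ B = ⊥ ∧ A ⊔ B = ⊤

/-- `A` is an essential submodule of `B`. -/
def IsEssentialIn {M : Type v} [AddCommGroup M] [Module S M] (A B : Submodule S M) : Prop :=
  A ≤ B ∧ ∀ K : Submodule S M, K ≤ B → K ≠ ⊥ → A ⊓ K ≠ ⊥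

/-- `A` is essential in some direct summand of `M`. -/
def EssentialInSummand {M : Type v} [AddCommGroup M] [Module S M] (A : Submodule S M) : Prop :=
  ∃ D : Submodule S M, IsDirectSummand D ∧ IsEssentialIn A D

/-- `A` is a small (superfluous) submodule of `M`. -/
def IsSmallSubmodule {M : Type v} [AddCommGroup M] [Module S M] (A : Submodule S M) : Prop :=
  ∀ K : Submodule S M, A ⊔ K = ⊤ → K = ⊤

/-- `A` lies above the direct summand `D` of `M`, i.e. `D ≤ A` and `A/D` is small in `M/D`. -/
def LiesAbove {M : Type v} [AddCommGroup M] [Module S M] (A D : Submodule S M) : Prop :=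
  IsDirectSummand D ∧ D ≤ A ∧ IsSmallSubmodule (Submodule.map D.mkQ A)

/-- `A` lies above some direct summand of `M`. -/
def LiesAboveSummand {M : Type v} [AddCommGroup M] [Module S M] (A : Submodule S M) : Prop :=
  ∃ D : Submodule S M, LiesAbove A D

end Defs

section ModDefs

variable (S : Type u) [Ring S]

/-- SSP: the sum of any two direct summands is a direct summand. -/
def HasSSP (M : Type v) [AddCommGroup M] [Module S M] : Prop :=
  ∀ A B : Submodule S M, IsDirectSummand A → IsDirectSummand B → IsDirectSummand (A ⊔ B)

/-- SIP: the intersection of any two direct summands is a direct summand. -/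
def HasSIP (M : Type v) [AddCommGroup M] [Module S M] : Prop :=
  ∀ A B : Submodule S M, IsDirectSummand A → IsDirectSummand B → IsDirectSummand (A ⊓ B)

/-- SIP-CS: the intersection of any finite family of direct summands is essential in a
direct summand. -/
def IsSIPCS (M : Type v) [AddCommGroup M] [Module S M] : Prop :=
  ∀ (ι : Type) [Fintype ι] (A : ι → Submodule S M),
    (∀ i, IsDirectSummand (A i)) → EssentialInSummand (⨅ i, A i)

/-- SSP-lifting: if each member of a finite family of submodules lies above a direct summand,
then their sum lies above a direct summand. -/
def IsSSPLifting (M : Type v) [AddCommGroup M] [Module S M] : Prop :=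
  ∀ (ι : Type) [Fintype ι] (A : ι → Submodule S M),
    (∀ i, LiesAboveSummand (A i)) → LiesAboveSummand (⨆ i, A i)

/-- C2 condition: every submodule isomorphic to a direct summand is a direct summand. -/
def HasC2 (M : Type v) [AddCommGroup M] [Module S M] : Prop :=
  ∀ A B : Submodule S M, IsDirectSummand B → Nonempty (A ≃ₗ[S] B) → IsDirectSummand A

/-- C3 condition: the sum of two direct summands with zero intersection is a direct summand. -/
def HasC3 (M : Type v) [AddCommGroup M] [Module S M] : Prop :=
  ∀ A B : Submodule S M, IsDirectSummand A → IsDirectSummand B → A ⊓ B = ⊥ →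
    IsDirectSummand (A ⊔ B)

/-- D2 condition: if `M/A` is isomorphic to a direct summand of `M` then `A` is a direct
summand. -/
def HasD2 (M : Type v) [AddCommGroup M] [Module S M] : Prop :=
  ∀ A : Submodule S M, (∃ B : Submodule S M, IsDirectSummand B ∧
    Nonempty ((M ⧸ A) ≃ₗ[S] B)) → IsDirectSummand A

/-- D3 condition: if two direct summands sum to `M`, their intersection is a direct summand. -/
def IsD3Module (M : Type v) [AddCommGroup M] [Module S M] : Prop :=
  ∀ A B : Submodule S M, IsDirectSummand A → IsDirectSummand B → A ⊔ B = ⊤ →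
    IsDirectSummand (A ⊓ B)

/-- `M` is relatively CS-Rickart to `N`. -/
def RelCSRickart (M : Type v) (N : Type w) [AddCommGroup M] [Module S M]
    [AddCommGroup N] [Module S N] : Prop :=
  ∀ φ : M →ₗ[S] N, EssentialInSummand (LinearMap.ker φ)

/-- `M` is relatively d-CS-Rickart to `N`. -/
def RelDCSRickart (M : Type v) (N : Type w) [AddCommGroup M] [Module S M]
    [AddCommGroup N] [Module S N] : Prop :=
  ∀ φ : N →ₗ[S] M, LiesAboveSummand (LinearMap.range φ)

/-- CS-Rickart module. -/
def IsCSRickart (M : Type v) [AddCommGroup M] [Module S M] : Prop :=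
  RelCSRickart S M M

/-- d-CS-Rickart module. -/
def IsDCSRickart (M : Type v) [AddCommGroup M] [Module S M] : Prop :=
  RelDCSRickart S M M

/-- `M` has an `Ω`-cover, where `Ω` is the class of modules satisfying `P`. -/
def HasCover (P : ModuleCat.{v} S → Prop) (M : Type v) [AddCommGroup M] [Module S M] : Prop :=
  ∃ (E : ModuleCat.{v} S) (g : E →ₗ[S] M), P E ∧
    (∀ (E' : ModuleCat.{v} S), P E' → ∀ g' : E' →ₗ[S] M,
      ∃ h : E' →ₗ[S] E, g ∘ₗ h = g') ∧
    (∀ h : E →ₗ[S] E, g ∘ₗ h = g → Function.Bijective h)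

/-- `M` has an `Ω`-envelope, where `Ω` is the class of modules satisfying `P`. -/
def HasEnvelope (P : ModuleCat.{v} S → Prop) (M : Type v) [AddCommGroup M] [Module S M] : Prop :=
  ∃ (E : ModuleCat.{v} S) (g : M →ₗ[S] E), P E ∧
    (∀ (E' : ModuleCat.{v} S), P E' → ∀ g' : M →ₗ[S] E',
      ∃ h : E →ₗ[S] E', h ∘ₗ g = g') ∧
    (∀ h : E →ₗ[S] E, h ∘ₗ g = g → Function.Bijective h)

/-- `M` is 2-generated. -/
def TwoGenerated (M : Type v) [AddCommGroup M] [Module S M] : Prop :=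
  ∃ a b : M, Submodule.span S ({a, b} : Set M) = ⊤

/-- `M` is finitely cogenerated. -/
def FinitelyCogenerated (M : Type v) [AddCommGroup M] [Module S M] : Prop :=
  ∀ 𝒜 : Set (Submodule S M), sInf 𝒜 = ⊥ →
    ∃ ℬ ⊆ 𝒜, ℬ.Finite ∧ sInf ℬ = ⊥

/-- The socle of `M`: the sum of all simple submodules. -/
def SocleOf (M : Type v) [AddCommGroup M] [Module S M] : Submodule S M :=
  sSup {A : Submodule S M | IsSimpleModule S ↥A}

/-- An indecomposable module: nonzero, and its only direct summands are `0` and itself. -/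
def IsIndecomposable (M : Type v) [AddCommGroup M] [Module S M] : Prop :=
  (⊤ : Submodule S M) ≠ ⊥ ∧
    ∀ A : Submodule S M, IsDirectSummand A → A = ⊥ ∨ A = ⊤

end ModDefs

section RingDefs

variable (R : Type u) [Ring R]

/-- The right annihilator of an element of a right `R`-module, as a right ideal of `R`. -/
def rightAnnihilator {M : Type v} [AddCommGroup M] [Module Rᵐᵒᵖ M] (m : M) :
    Submodule Rᵐᵒᵖ R where
  carrier := {r : R | MulOpposite.op r • m = 0}
  add_mem' := by
    intro a b ha hb
    simp only [Set.mem_setOf_eq] at *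
    rw [MulOpposite.op_add, add_smul, ha, hb, add_zero]
  zero_mem' := by simp
  smul_mem' := by
    intro c x hx
    simp only [Set.mem_setOf_eq] at *
    have : MulOpposite.op (c • x) = c * MulOpposite.op x := by
      rw [MulOpposite.smul_eq_mul_unop]
      simp [MulOpposite.op_mul]
    rw [this, mul_smul, hx, smul_zero]

/-- `M` is a nonsingular right `R`-module. -/
def IsNonsingular (M : Type v) [AddCommGroup M] [Module Rᵐᵒᵖ M] : Prop :=
  ∀ m : M, IsEssentialIn (rightAnnihilator R m) (⊤ : Submodule Rᵐᵒᵖ R) → m = 0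

/-- `R` is a right V-ring: every simple right `R`-module is injective. -/
def IsRightVRing : Prop :=
  ∀ (N : Type u) [AddCommGroup N] [Module Rᵐᵒᵖ N],
    IsSimpleModule Rᵐᵒᵖ N → Module.Injective Rᵐᵒᵖ N

/-- `R` is semiregular: `R/J(R)` is von Neumann regular and idempotents lift modulo `J(R)`. -/
def IsSemiregularRing : Prop :=
  (∀ a : R, ∃ b : R, a - a * b * a ∈ Ideal.jacobson (⊥ : Ideal R) ∧ b = b * a * b) ∧
  (∀ a : R, a * a - a ∈ Ideal.jacobson (⊥ : Ideal R) →
    ∃ e : R, e * e = e ∧ e - a ∈ Ideal.jacobson (⊥ : Ideal R))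

end RingDefs


section Aux

variable {R : Type u} [Ring R]

/-- The right-multiplication-by-`d` map `x ↦ op x • d` as an `Rᵐᵒᵖ`-linear map from `R`. -/
def smulMapAux (N : Type v) [AddCommGroup N] [Module Rᵐᵒᵖ N] (d : N) : R →ₗ[Rᵐᵒᵖ] N where
  toFun x := MulOpposite.op x • d
  map_add' x y := by rw [MulOpposite.op_add, add_smul]
  map_smul' c x := by
    dsimp only [RingHom.id_apply]
    rw [MulOpposite.smul_eq_mul_unop, MulOpposite.op_mul, MulOpposite.op_unop, mul_smul]

@[simp] lemma smulMapAux_apply {N : Type v} [AddCommGroup N] [Module Rᵐᵒᵖ N] (d : N) (x : R) :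
    smulMapAux N d x = MulOpposite.op x • d := rfl

def opHomAux : R →ₗ[Rᵐᵒᵖ] Rᵐᵒᵖ where
  toFun := MulOpposite.op
  map_add' x y := by simp
  map_smul' c x := by
    dsimp only [RingHom.id_apply]
    rw [MulOpposite.smul_eq_mul_unop, MulOpposite.op_mul, MulOpposite.op_unop, smul_eq_mul]

def unopHomAux : Rᵐᵒᵖ →ₗ[Rᵐᵒᵖ] R where
  toFun := MulOpposite.unop
  map_add' x y := by simp
  map_smul' c x := by
    dsimp only [RingHom.id_apply]
    rw [smul_eq_mul, MulOpposite.unop_mul, MulOpposite.smul_eq_mul_unop]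

lemma projective_R_over_op : Module.Projective Rᵐᵒᵖ R :=
  Module.Projective.of_split (opHomAux (R := R)) (unopHomAux (R := R))
    (LinearMap.ext fun _ => rfl)

end Aux

/-- if `M` is nonsingular and `(R ⊕ M)_R` is SIP-CS, then every cyclic
submodule of `M` is projective. -/
theorem statement_18 (R : Type u) [Ring R] (M : Type u) [AddCommGroup M] [Module Rᵐᵒᵖ M]
    (hM : IsNonsingular R M) (h : IsSIPCS Rᵐᵒᵖ (R × M)) :
    ∀ m : M, Module.Projective Rᵐᵒᵖ ↥(Submodule.span Rᵐᵒᵖ ({m} : Set M)) := by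
  intro m
  classical
  set φ : R →ₗ[Rᵐᵒᵖ] M := smulMapAux M m with hφdef
  set G : Submodule Rᵐᵒᵖ (R × M) := LinearMap.graph φ with hGdef
  set T : Submodule Rᵐᵒᵖ (R × M) := Submodule.prod ⊤ ⊥ with hTdef
  set B : Submodule Rᵐᵒᵖ (R × M) := Submodule.prod ⊥ ⊤ with hBdef
  -- G is a direct summand with complement B
  have hG : IsDirectSummand G := by
    refine ⟨B, ?_, ?_⟩
    · rw [eq_bot_iff]
      rintro ⟨x, n⟩ ⟨hg, hb⟩
      obtain ⟨hx, -⟩ := Submodule.mem_prod.mp hb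
      have hx0 : x = 0 := hx
      have hn : n = φ x := (LinearMap.mem_graph_iff φ _).mp hg
      subst hx0
      simp only [map_zero] at hn
      subst hn
      simp
    · rw [eq_top_iff]
      rintro ⟨x, n⟩ -
      have h1 : ((x, φ x) : R × M) ∈ G := (LinearMap.mem_graph_iff φ _).mpr rfl
      have h2 : ((0, n - φ x) : R × M) ∈ B := Submodule.mem_prod.mpr ⟨rfl, trivial⟩
      have : ((x, n) : R × M) = (x, φ x) + (0, n - φ x) := by
        simp [Prod.ext_iff]
      rw [this]
      exact Submodule.add_mem_sup h1 h2
  have hT : IsDirectSummand T := by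
    refine ⟨B, ?_, ?_⟩
    · rw [eq_bot_iff]
      rintro ⟨x, n⟩ ⟨ht, hb⟩
      obtain ⟨-, hn⟩ := Submodule.mem_prod.mp ht
      obtain ⟨hx, -⟩ := Submodule.mem_prod.mp hb
      have hx0 : x = 0 := hx
      have hn0 : n = 0 := hn
      subst hx0; subst hn0; simp
    · rw [eq_top_iff]
      rintro ⟨x, n⟩ -
      have h1 : ((x, 0) : R × M) ∈ T := Submodule.mem_prod.mpr ⟨trivial, rfl⟩
      have h2 : ((0, n) : R × M) ∈ B := Submodule.mem_prod.mpr ⟨rfl, trivial⟩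
      have : ((x, n) : R × M) = (x, 0) + (0, n) := by simp
      rw [this]
      exact Submodule.add_mem_sup h1 h2
  -- apply SIP-CS to the family {G, T}
  obtain ⟨D, hD, hEss⟩ := h Bool (fun b => if b then G else T)
    (fun b => by cases b <;> simpa using (by first | exact hT | exact hG))
  have hinf : (⨅ b : Bool, if b then G else T) = G ⊓ T := by
    rw [iInf_bool_eq]; simp
  rw [hinf] at hEss
  -- every element of D lies in G ⊓ T
  have key : ∀ d ∈ D, d ∈ G ⊓ T := by
    intro d hd
    set I : Submodule Rᵐᵒᵖ R := Submodule.comap (smulMapAux (R × M) d) (G ⊓ T) with hIdef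
    have hmemI : ∀ r : R, r ∈ I ↔ MulOpposite.op r • d ∈ G ⊓ T := fun r => Iff.rfl
    -- I is essential in R
    have hIess : IsEssentialIn I (⊤ : Submodule Rᵐᵒᵖ R) := by
      refine ⟨le_top, ?_⟩
      intro K _hKle hK0
      obtain ⟨k, hkK, hk0⟩ := Submodule.exists_mem_ne_zero_of_ne_bot hK0
      by_cases hkd : MulOpposite.op k • d = 0
      · have hkI : k ∈ I := (hmemI k).mpr (by rw [hkd]; exact Submodule.zero_mem _)
        intro hc
        exact hk0 ((Submodule.eq_bot_iff _).mp hc k ⟨hkI, hkK⟩)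
      · set Sd : Submodule Rᵐᵒᵖ (R × M) :=
          Submodule.span Rᵐᵒᵖ {MulOpposite.op k • d} with hSddef
        have hSdD : Sd ≤ D := by
          rw [Submodule.span_le, Set.singleton_subset_iff]
          exact Submodule.smul_mem D _ hd
        have hSd0 : Sd ≠ ⊥ := by
          rw [hSddef, Ne, Submodule.span_singleton_eq_bot]
          exact hkd
        have hne := hEss.2 Sd hSdD hSd0
        obtain ⟨a, ⟨haA, haS⟩, ha0⟩ := Submodule.exists_mem_ne_zero_of_ne_bot hne
        obtain ⟨c, hc⟩ := Submodule.mem_span_singleton.mp haS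
        have hop : MulOpposite.op (k * c.unop) • d = a := by
          rw [MulOpposite.op_mul, MulOpposite.op_unop, mul_smul]
          exact hc
        have hks0 : k * c.unop ≠ 0 := by
          intro hz
          rw [hz] at hop
          simp only [MulOpposite.op_zero, zero_smul] at hop
          exact ha0 hop.symm
        have hmem : k * c.unop ∈ I ⊓ K := by
          constructor
          · exact (hmemI _).mpr (by rw [hop]; exact haA)
          · have : c • k = k * c.unop := MulOpposite.smul_eq_mul_unop c k
            rw [← this]
            exact Submodule.smul_mem K c hkK
        intro hcbot
        exact hks0 ((Submodule.eq_bot_iff _).mp hcbot _ hmem)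
      -- n-annihilation
    have key2 : ∀ n : M, I ≤ rightAnnihilator R n → n = 0 := by
      intro n hle
      apply hM
      refine ⟨le_top, ?_⟩
      intro K hKle hK0 hcontra
      refine hIess.2 K hKle hK0 ?_
      rw [eq_bot_iff]
      refine le_trans (inf_le_inf_right K hle) ?_
      rw [hcontra]
    obtain ⟨x, n⟩ := d
    -- second components
    have hn0 : n = 0 := by
      apply key2
      intro r hr
      show MulOpposite.op r • n = 0
      have := ((hmemI r).mp hr).2
      obtain ⟨-, h2⟩ := Submodule.mem_prod.mp this
      have : (MulOpposite.op r • ((x, n) : R × M)).2 = 0 := h2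
      simpa using this
    have hφx0 : φ x = 0 := by
      apply key2
      intro r hr
      show MulOpposite.op r • φ x = 0
      have hrG := ((hmemI r).mp hr).1
      have heq := (LinearMap.mem_graph_iff φ _).mp hrG
      have h1 : (MulOpposite.op r • ((x, n) : R × M)).1 = MulOpposite.op r • x := rfl
      have h2 : (MulOpposite.op r • ((x, n) : R × M)).2 = MulOpposite.op r • n := rfl
      rw [h1, h2] at heq
      have := φ.map_smul (MulOpposite.op r) x
      rw [this] at heq
      have hrT := ((hmemI r).mp hr).2
      obtain ⟨-, hT2⟩ := Submodule.mem_prod.mp hrT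
      have hn2 : (MulOpposite.op r • ((x, n) : R × M)).2 = 0 := hT2
      rw [h2] at hn2
      rw [hn2] at heq
      exact heq.symm
    constructor
    · exact (LinearMap.mem_graph_iff φ _).mpr (by rw [hφx0, hn0])
    · exact Submodule.mem_prod.mpr ⟨trivial, by simpa using hn0⟩
  -- hence D = G ⊓ T and G ⊓ T is a direct summand
  have hDeq : D = G ⊓ T := le_antisymm key hEss.1
  rw [hDeq] at hD
  -- G ⊓ T = (ker φ).prod ⊥
  have hA : G ⊓ T = (LinearMap.ker φ).prod ⊥ := by
    ext ⟨x, n⟩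
    simp only [hGdef, hTdef, Submodule.mem_inf, LinearMap.mem_graph_iff, Submodule.mem_prod,
      Submodule.mem_top, Submodule.mem_bot, true_and, LinearMap.mem_ker]
    constructor
    · rintro ⟨h1, h2⟩
      exact ⟨by rw [← h1, h2], h2⟩
    · rintro ⟨h1, h2⟩
      exact ⟨by rw [h1, h2], h2⟩
  rw [hA] at hD
  obtain ⟨C, hAC1, hAC2⟩ := hD
  have hcompl : IsCompl ((LinearMap.ker φ).prod ⊥) C :=
    ⟨disjoint_iff.mpr hAC1, codisjoint_iff.mpr hAC2⟩
  -- build a splitting of the quotient map R → R ⧸ ker φ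
  set π := C.linearProjOfIsCompl _ hcompl.symm with hπdef
  set j0 : R →ₗ[Rᵐᵒᵖ] R :=
    (LinearMap.fst Rᵐᵒᵖ R M).comp ((C.subtype.comp π).comp (LinearMap.inl Rᵐᵒᵖ R M))
    with hj0def
  have hker2 : LinearMap.ker φ ≤ LinearMap.ker j0 := by
    intro x hx
    have hxA : ((x, 0) : R × M) ∈ (LinearMap.ker φ).prod ⊥ :=
      Submodule.mem_prod.mpr ⟨hx, rfl⟩
    have : π ((LinearMap.inl Rᵐᵒᵖ R M) x) = 0 := by
      apply Submodule.linearProjOfIsCompl_apply_right' hcompl.symm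
      simpa using hxA
    simp only [LinearMap.mem_ker, LinearMap.comp_apply, hj0def, this]
    simp
  set i : (R ⧸ LinearMap.ker φ) →ₗ[Rᵐᵒᵖ] R :=
    (LinearMap.ker φ).liftQ j0 hker2 with hidef
  have hsplit : ((LinearMap.ker φ).mkQ).comp i = LinearMap.id := by
    apply Submodule.linearMap_qext
    refine LinearMap.ext fun x => ?_
    simp only [LinearMap.comp_apply, Submodule.liftQ_apply, hidef, LinearMap.id_apply]
    rw [Submodule.mkQ_apply, Submodule.mkQ_apply, Submodule.Quotient.eq]
    -- j0 x - x ∈ ker φ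
    have hdecomp := Submodule.projection_add_projection_eq_self hcompl
      ((LinearMap.inl Rᵐᵒᵖ R M) x)
    set a := ((LinearMap.ker φ).prod ⊥).projectionOnto C hcompl
      ((LinearMap.inl Rᵐᵒᵖ R M) x) with hadef
    have haA : (a : R × M) ∈ (LinearMap.ker φ).prod ⊥ := a.2
    have hfst : (a : R × M).1 ∈ LinearMap.ker φ := (Submodule.mem_prod.mp haA).1
    have hx1 : j0 x = x - (a : R × M).1 := by
      have : (↑(π ((LinearMap.inl Rᵐᵒᵖ R M) x)) : R × M) =
          (LinearMap.inl Rᵐᵒᵖ R M) x - (a : R × M) := by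
        rw [eq_sub_iff_add_eq, add_comm]
        exact hdecomp
      simp only [hj0def, LinearMap.comp_apply, Submodule.coe_subtype]
      rw [this]
      simp
    rw [Submodule.liftQ_apply, hx1]
    simpa using (LinearMap.ker φ).neg_mem hfst
  have hproj : Module.Projective Rᵐᵒᵖ (R ⧸ LinearMap.ker φ) := by
    have := projective_R_over_op (R := R)
    exact Module.Projective.of_split i ((LinearMap.ker φ).mkQ) hsplit
  -- span {m} = range φ
  have hspan : Submodule.span Rᵐᵒᵖ ({m} : Set M) = LinearMap.range φ := by
    ext y
    rw [Submodule.mem_span_singleton, LinearMap.mem_range]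
    constructor
    · rintro ⟨c, hc⟩
      exact ⟨c.unop, by simpa [hφdef] using hc⟩
    · rintro ⟨x, hx⟩
      exact ⟨MulOpposite.op x, hx⟩
  rw [hspan]
  exact Module.Projective.of_equiv φ.quotKerEquivRange
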